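/- Fix a real number l_B > 0 and let G = U(1)⋉𝔼² be the continuum magnetic Euclidean group. Represent U(1)-components by z ∈ [0,1) and rotation components by θ ∈ [0,2π), and define c₁(g₁,g₂) = z₁ + z₂ + (r₁ × R_{θ₁} r₂)/(2 l_B²) − z₁₂ and c₂(g₁,g₂) = (θ₁ + θ₂ − θ₁₂)/(2π), where z₁₂ and θ₁₂ are the representatives of the corresponding components of g₁g₂. Then c₁ and c₂ are integer-valued 2-cocycles on G; consequently, for any abelian group A (written multiplicatively) and any v, s ∈ A, the function 𝔴(g₁,g₂) = v^{c₁(g₁,g₂)} · s^{c₂(g₁,g₂)} is an A-valued 2-cocycle on G. -/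
import Mathlib


noncomputable section

universe u

/-- The cross product of plane vectors. -/
def crossR (r r' : Fin 2 → ℝ) : ℝ := r 0 * r' 1 - r 1 * r' 0

/-- Rotation of the plane by the angle `θ`. -/
def rotAngle (θ : Real.Angle) (r : Fin 2 → ℝ) : Fin 2 → ℝ :=
  ![θ.cos * r 0 - θ.sin * r 1, θ.sin * r 0 + θ.cos * r 1]

/-- The underlying set of the continuum magnetic Euclidean group `U(1)⋉𝔼²`. -/
abbrev MagEuc : Type := AddCircle (1 : ℝ) × (Fin 2 → ℝ) × Real.Angle

/-- The continuum magnetic Euclidean group multiplication. -/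
def magEucMul (lB : ℝ) (g₁ g₂ : MagEuc) : MagEuc :=
  (g₁.1 + g₂.1 +
      (↑((crossR g₁.2.1 (rotAngle g₁.2.2 g₂.2.1) / (2 * lB ^ 2) : ℝ)) : AddCircle (1 : ℝ)),
    g₁.2.1 + rotAngle g₁.2.2 g₂.2.1,
    g₁.2.2 + g₂.2.2)

/-- The representative in `[0,1)` of an element of `ℝ/ℤ`. -/
def rep1 (z : AddCircle (1 : ℝ)) : ℝ :=
  haveI : Fact ((0 : ℝ) < 1) := ⟨one_pos⟩
  (AddCircle.equivIco 1 0 z : ℝ)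

/-- The representative in `[0,2π)` of an angle. -/
def repAngle (θ : Real.Angle) : ℝ :=
  if θ.toReal < 0 then θ.toReal + 2 * Real.pi else θ.toReal

/-- The charge cocycle `c₁(g₁,g₂) = z₁ + z₂ + (r₁ × R_{θ₁} r₂)/(2 l_B²) − z₁₂`. -/
def cOne (lB : ℝ) (g₁ g₂ : MagEuc) : ℝ :=
  rep1 g₁.1 + rep1 g₂.1 + crossR g₁.2.1 (rotAngle g₁.2.2 g₂.2.1) / (2 * lB ^ 2) -
    rep1 (magEucMul lB g₁ g₂).1

/-- The rotation cocycle `c₂(g₁,g₂) = (θ₁ + θ₂ − θ₁₂)/(2π)`. -/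
def cTwo (lB : ℝ) (g₁ g₂ : MagEuc) : ℝ :=
  (repAngle g₁.2.2 + repAngle g₂.2.2 - repAngle (magEucMul lB g₁ g₂).2.2) / (2 * Real.pi)

/-- The symmetry fractionalization cochain `𝔴 = v^{c₁} · s^{c₂}`. -/
def wVS (lB : ℝ) (A : Type u) [CommGroup A] (v s : A) (g₁ g₂ : MagEuc) : A :=
  v ^ ⌊cOne lB g₁ g₂⌋ * s ^ ⌊cTwo lB g₁ g₂⌋

/-! ### Auxiliary lemmas -/

lemma coe_rep1 (z : AddCircle (1 : ℝ)) : ((rep1 z : ℝ) : AddCircle (1 : ℝ)) = z := by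
  haveI : Fact ((0 : ℝ) < 1) := ⟨one_pos⟩
  exact (AddCircle.equivIco 1 0).symm_apply_apply z

lemma coe_repAngle (θ : Real.Angle) : ((repAngle θ : ℝ) : Real.Angle) = θ := by
  unfold repAngle
  split
  · rw [Real.Angle.coe_add, Real.Angle.coe_two_pi, add_zero, Real.Angle.coe_toReal]
  · exact Real.Angle.coe_toReal θ

lemma rotAngle_add (θ₁ θ₂ : Real.Angle) (r : Fin 2 → ℝ) :
    rotAngle (θ₁ + θ₂) r = rotAngle θ₁ (rotAngle θ₂ r) := by
  funext i
  fin_cases i <;>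
    simp [rotAngle, Real.Angle.cos_add, Real.Angle.sin_add] <;> ring

lemma rotAngle_add_vec (θ : Real.Angle) (a b : Fin 2 → ℝ) :
    rotAngle θ (a + b) = rotAngle θ a + rotAngle θ b := by
  funext i
  fin_cases i <;> simp [rotAngle] <;> ring

lemma crossR_add_left (a b c : Fin 2 → ℝ) : crossR (a + b) c = crossR a c + crossR b c := by
  simp [crossR]; ring

lemma crossR_add_right (a b c : Fin 2 → ℝ) : crossR a (b + c) = crossR a b + crossR a c := by
  simp [crossR]; ring

lemma crossR_rot (θ : Real.Angle) (a b : Fin 2 → ℝ) :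
    crossR (rotAngle θ a) (rotAngle θ b) = crossR a b := by
  have h := Real.Angle.cos_sq_add_sin_sq θ
  simp only [crossR, rotAngle]
  simp only [Matrix.cons_val_zero, Matrix.cons_val_one, Matrix.head_cons]
  linear_combination (a 0 * b 1 - a 1 * b 0) * h

/-- The real-valued magnetic 2-cocycle `X`. -/
def Xc (lB : ℝ) (g₁ g₂ : MagEuc) : ℝ :=
  crossR g₁.2.1 (rotAngle g₁.2.2 g₂.2.1) / (2 * lB ^ 2)

lemma Xc_cocycle (lB : ℝ) (g₁ g₂ g₃ : MagEuc) :
    Xc lB g₂ g₃ - Xc lB (magEucMul lB g₁ g₂) g₃ + Xc lB g₁ (magEucMul lB g₂ g₃) -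
      Xc lB g₁ g₂ = 0 := by
  unfold Xc magEucMul
  simp only [rotAngle_add, rotAngle_add_vec, crossR_add_left, crossR_add_right, crossR_rot]
  ring

lemma cOne_int (lB : ℝ) (g₁ g₂ : MagEuc) : ∃ k : ℤ, cOne lB g₁ g₂ = k := by
  have h : ((cOne lB g₁ g₂ : ℝ) : AddCircle (1 : ℝ)) = 0 := by
    unfold cOne
    rw [AddCircle.coe_sub, AddCircle.coe_add, AddCircle.coe_add, coe_rep1, coe_rep1, coe_rep1]
    show g₁.1 + g₂.1 + _ - (magEucMul lB g₁ g₂).1 = 0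
    simp [magEucMul]
  rw [AddCircle.coe_eq_zero_iff] at h
  obtain ⟨n, hn⟩ := h
  exact ⟨n, by simpa using hn.symm⟩

lemma cTwo_int (lB : ℝ) (g₁ g₂ : MagEuc) : ∃ k : ℤ, cTwo lB g₁ g₂ = k := by
  have h : ((repAngle g₁.2.2 + repAngle g₂.2.2 -
      repAngle (magEucMul lB g₁ g₂).2.2 : ℝ) : Real.Angle) = ((0 : ℝ) : Real.Angle) := by
    rw [Real.Angle.coe_sub, Real.Angle.coe_add, coe_repAngle, coe_repAngle, coe_repAngle]
    show g₁.2.2 + g₂.2.2 - (magEucMul lB g₁ g₂).2.2 = _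
    simp [magEucMul]
  rw [Real.Angle.angle_eq_iff_two_pi_dvd_sub] at h
  obtain ⟨k, hk⟩ := h
  refine ⟨k, ?_⟩
  unfold cTwo
  rw [sub_zero] at hk
  rw [hk]
  field_simp

lemma cOne_cocycle (lB : ℝ) (g₁ g₂ g₃ : MagEuc) :
    cOne lB g₂ g₃ - cOne lB (magEucMul lB g₁ g₂) g₃ + cOne lB g₁ (magEucMul lB g₂ g₃) -
      cOne lB g₁ g₂ = 0 := by
  set XA := crossR g₁.2.1 (rotAngle g₁.2.2 g₂.2.1) / (2 * lB ^ 2) with hXA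
  set YA := crossR (g₁.2.1 + rotAngle g₁.2.2 g₂.2.1) (rotAngle (g₁.2.2 + g₂.2.2) g₃.2.1) /
      (2 * lB ^ 2) with hYA
  set XB := crossR g₂.2.1 (rotAngle g₂.2.2 g₃.2.1) / (2 * lB ^ 2) with hXB
  set YB := crossR g₁.2.1 (rotAngle g₁.2.2 (g₂.2.1 + rotAngle g₂.2.2 g₃.2.1)) / (2 * lB ^ 2)
      with hYB
  have hX := Xc_cocycle lB g₁ g₂ g₃
  unfold Xc magEucMul at hX
  rw [← hXA, ← hYA, ← hXB, ← hYB] at hX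
  have hr : XA + YA = XB + YB := by linarith
  have hassoc : (magEucMul lB (magEucMul lB g₁ g₂) g₃).1
      = (magEucMul lB g₁ (magEucMul lB g₂ g₃)).1 := by
    simp only [magEucMul]
    rw [← hXA, ← hYA, ← hXB, ← hYB]
    have h2 : ((XA : ℝ) : AddCircle (1 : ℝ)) + (YA : ℝ) = ((XB : ℝ) : AddCircle (1 : ℝ)) +
        (YB : ℝ) := by
      rw [← AddCircle.coe_add, ← AddCircle.coe_add, hr]
    have h3 : g₁.1 + g₂.1 + ((XA : ℝ) : AddCircle (1 : ℝ)) + g₃.1 + ((YA : ℝ) : AddCircle (1 : ℝ))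
        = g₁.1 + g₂.1 + g₃.1 + (((XA : ℝ) : AddCircle (1 : ℝ)) + (YA : ℝ)) := by abel
    have h4 : g₁.1 + (g₂.1 + g₃.1 + ((XB : ℝ) : AddCircle (1 : ℝ))) +
        ((YB : ℝ) : AddCircle (1 : ℝ))
        = g₁.1 + g₂.1 + g₃.1 + (((XB : ℝ) : AddCircle (1 : ℝ)) + (YB : ℝ)) := by abel
    rw [h3, h4, h2]
  have e1 : rep1 (magEucMul lB (magEucMul lB g₁ g₂) g₃).1
      = rep1 (magEucMul lB g₁ (magEucMul lB g₂ g₃)).1 := by rw [hassoc]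
  unfold cOne
  simp only [magEucMul]
  rw [← hXA, ← hYA, ← hXB, ← hYB]
  have e1' := e1
  simp only [magEucMul] at e1'
  rw [← hXA, ← hYA, ← hXB, ← hYB] at e1'
  rw [e1']
  linarith [hr]

lemma cTwo_cocycle (lB : ℝ) (g₁ g₂ g₃ : MagEuc) :
    cTwo lB g₂ g₃ - cTwo lB (magEucMul lB g₁ g₂) g₃ + cTwo lB g₁ (magEucMul lB g₂ g₃) -
      cTwo lB g₁ g₂ = 0 := by
  unfold cTwo
  have h12 : (magEucMul lB g₁ g₂).2.2 = g₁.2.2 + g₂.2.2 := rfl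
  have h23 : (magEucMul lB g₂ g₃).2.2 = g₂.2.2 + g₃.2.2 := rfl
  have h123 : (magEucMul lB (magEucMul lB g₁ g₂) g₃).2.2 = g₁.2.2 + g₂.2.2 + g₃.2.2 := rfl
  have h123' : (magEucMul lB g₁ (magEucMul lB g₂ g₃)).2.2 = g₁.2.2 + (g₂.2.2 + g₃.2.2) := rfl
  rw [h12, h23, h123, h123', add_assoc]
  ring

/-- `c₁` and `c₂` are integer-valued 2-cocycles on `U(1)⋉𝔼²`; consequently for any
abelian group `A` and `v, s ∈ A` the function `𝔴 = v^{c₁} s^{c₂}` is an `A`-valued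
2-cocycle. -/
theorem continuum_fractionalization_cocycles (lB : ℝ) (hlB : 0 < lB) :
    (∀ g₁ g₂ : MagEuc, ∃ k : ℤ, cOne lB g₁ g₂ = k) ∧
    (∀ g₁ g₂ : MagEuc, ∃ k : ℤ, cTwo lB g₁ g₂ = k) ∧
    (∀ g₁ g₂ g₃ : MagEuc,
      cOne lB g₂ g₃ - cOne lB (magEucMul lB g₁ g₂) g₃ + cOne lB g₁ (magEucMul lB g₂ g₃) -
        cOne lB g₁ g₂ = 0) ∧
    (∀ g₁ g₂ g₃ : MagEuc,
      cTwo lB g₂ g₃ - cTwo lB (magEucMul lB g₁ g₂) g₃ + cTwo lB g₁ (magEucMul lB g₂ g₃) -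
        cTwo lB g₁ g₂ = 0) ∧
    (∀ (A : Type u) [CommGroup A], ∀ v s : A, ∀ g₁ g₂ g₃ : MagEuc,
      wVS lB A v s g₂ g₃ * (wVS lB A v s (magEucMul lB g₁ g₂) g₃)⁻¹ *
          wVS lB A v s g₁ (magEucMul lB g₂ g₃) * (wVS lB A v s g₁ g₂)⁻¹ = 1) := by
  refine ⟨cOne_int lB, cTwo_int lB, cOne_cocycle lB, cTwo_cocycle lB, ?_⟩
  intro A _ v s g₁ g₂ g₃
  obtain ⟨a1, ha1⟩ := cOne_int lB g₂ g₃
  obtain ⟨a2, ha2⟩ := cOne_int lB (magEucMul lB g₁ g₂) g₃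
  obtain ⟨a3, ha3⟩ := cOne_int lB g₁ (magEucMul lB g₂ g₃)
  obtain ⟨a4, ha4⟩ := cOne_int lB g₁ g₂
  obtain ⟨b1, hb1⟩ := cTwo_int lB g₂ g₃
  obtain ⟨b2, hb2⟩ := cTwo_int lB (magEucMul lB g₁ g₂) g₃
  obtain ⟨b3, hb3⟩ := cTwo_int lB g₁ (magEucMul lB g₂ g₃)
  obtain ⟨b4, hb4⟩ := cTwo_int lB g₁ g₂
  have hA : a1 - a2 + a3 - a4 = 0 := by
    have := cOne_cocycle lB g₁ g₂ g₃
    rw [ha1, ha2, ha3, ha4] at this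
    exact_mod_cast this
  have hB : b1 - b2 + b3 - b4 = 0 := by
    have := cTwo_cocycle lB g₁ g₂ g₃
    rw [hb1, hb2, hb3, hb4] at this
    exact_mod_cast this
  simp only [wVS, ha1, ha2, ha3, ha4, hb1, hb2, hb3, hb4, Int.floor_intCast]
  have : v ^ a1 * s ^ b1 * (v ^ a2 * s ^ b2)⁻¹ * (v ^ a3 * s ^ b3) * (v ^ a4 * s ^ b4)⁻¹
      = v ^ (a1 - a2 + a3 - a4) * s ^ (b1 - b2 + b3 - b4) := by
    simp only [zpow_sub, zpow_add, mul_inv]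
    simp [mul_comm, mul_assoc, mul_left_comm]
  rw [this, hA, hB, zpow_zero, zpow_zero, mul_one]
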